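/- Let b₁, b₂, b₃ be real numbers, let g(x) = x³ + b₁x² + b₂x + b₃, and let D(g) = 18·b₁·b₂·b₃ + b₁²·b₂² − 4·b₁³·b₃ − 4·b₂³ − 27·b₃². If D(g) < 0, b₁ < 0, b₂ < 0, and 2/3 < α ≤ 1, then there exists a complex root z of g with |arg(z)| < α·π/2 (so an equilibrium with characteristic polynomial g is unstable). -/

import Mathlib

/-- Every monic real cubic has a real root. -/
lemma cubic_has_real_root (b₁ b₂ b₃ : ℝ) :
    ∃ r : ℝ, r ^ 3 + b₁ * r ^ 2 + b₂ * r + b₃ = 0 := by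
  obtain ⟨M, hM1, hMa, hMb, hMc⟩ : ∃ M : ℝ, 1 ≤ M ∧ |b₁| ≤ M - 1 - |b₂| - |b₃| ∧
      |b₂| ≤ M ∧ |b₃| ≤ M := by
    refine ⟨1 + |b₁| + |b₂| + |b₃|, ?_, ?_, ?_, ?_⟩ <;>
      nlinarith [abs_nonneg b₁, abs_nonneg b₂, abs_nonneg b₃]
  have ha1 := le_abs_self b₁; have ha2 := le_abs_self b₂; have ha3 := le_abs_self b₃
  have hn1 := neg_abs_le b₁; have hn2 := neg_abs_le b₂; have hn3 := neg_abs_le b₃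
  have hb1 := abs_nonneg b₁; have hb2 := abs_nonneg b₂; have hb3 := abs_nonneg b₃
  have hfM : 0 ≤ M ^ 3 + b₁ * M ^ 2 + b₂ * M + b₃ := by
    nlinarith [sq_nonneg M, mul_le_mul_of_nonneg_left hn1 (sq_nonneg M), sq_nonneg (M - 1)]
  have hfM' : (-M) ^ 3 + b₁ * (-M) ^ 2 + b₂ * (-M) + b₃ ≤ 0 := by
    nlinarith [sq_nonneg M, mul_le_mul_of_nonneg_left ha1 (sq_nonneg M), sq_nonneg (M - 1)]
  have hcont : ContinuousOn (fun x : ℝ => x ^ 3 + b₁ * x ^ 2 + b₂ * x + b₃)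
      (Set.Icc (-M) M) := by fun_prop
  have hsub := intermediate_value_Icc (by linarith : -M ≤ M) hcont
  obtain ⟨r, _, hr⟩ := hsub ⟨hfM', hfM⟩
  exact ⟨r, hr⟩

/-- Fractional Routh–Hurwitz case (iv) for the cubic `g(x) = x³ + b₁x² + b₂x + b₃`:
if `D(g) < 0`, `b₁ < 0`, `b₂ < 0`, and `2/3 < α ≤ 1`, then some complex root
`z` of `g` satisfies `|arg z| < α·π/2` (instability). -/
theorem cubic_unstable_case_iv (b₁ b₂ b₃ α : ℝ)
    (hD : 18 * b₁ * b₂ * b₃ + b₁ ^ 2 * b₂ ^ 2 - 4 * b₁ ^ 3 * b₃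
            - 4 * b₂ ^ 3 - 27 * b₃ ^ 2 < 0)
    (hb₁ : b₁ < 0) (hb₂ : b₂ < 0)
    (hα₁ : 2 / 3 < α) (hα₂ : α ≤ 1) :
    ∃ z : ℂ, z ^ 3 + (b₁ : ℂ) * z ^ 2 + (b₂ : ℂ) * z + (b₃ : ℂ) = 0 ∧
      |z.arg| < α * Real.pi / 2 := by
  have hπ := Real.pi_pos
  have hαπ : Real.pi / 3 < α * Real.pi / 2 := by nlinarith
  obtain ⟨r, hr⟩ := cubic_has_real_root b₁ b₂ b₃
  by_cases hr0 : 0 ≤ r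
  · refine ⟨(r : ℂ), ?_, ?_⟩
    · exact_mod_cast congrArg (fun t : ℝ => (t : ℂ)) hr
    · rw [Complex.arg_ofReal_of_nonneg hr0, abs_zero]
      nlinarith
  · push_neg at hr0
    have hb3' : b₃ = -r * (b₂ + b₁ * r + r ^ 2) := by linear_combination hr
    by_cases hΔ : 0 ≤ (b₁ + r) ^ 2 - 4 * (b₂ + b₁ * r + r ^ 2)
    · exfalso
      rw [hb3'] at hD
      nlinarith [mul_nonneg (sq_nonneg (r ^ 2 + r * (b₁ + r) + (b₂ + b₁ * r + r ^ 2))) hΔ]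
    · push_neg at hΔ
      obtain ⟨c, hc⟩ : ∃ c : ℝ, c = b₁ + r := ⟨_, rfl⟩
      obtain ⟨d, hd⟩ : ∃ d : ℝ, d = b₂ + b₁ * r + r ^ 2 := ⟨_, rfl⟩
      have hΔ' : c ^ 2 - 4 * d < 0 := by rw [hc, hd]; exact hΔ
      have hd4 : 0 ≤ 4 * d - c ^ 2 := by linarith
      obtain ⟨y, hy2⟩ : ∃ y : ℝ, y ^ 2 = d - c ^ 2 / 4 := by
        refine ⟨Real.sqrt (4 * d - c ^ 2) / 2, ?_⟩
        rw [div_pow, Real.sq_sqrt hd4]; ring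
      obtain ⟨z, hz⟩ : ∃ z : ℂ, z = (↑(-(c / 2)) : ℂ) + (y : ℂ) * Complex.I := ⟨_, rfl⟩
      have hzre : z.re = -(c / 2) := by simp [hz]
      have hzim : z.im = y := by simp [hz]
      have hy2C : (y : ℂ) ^ 2 = (d : ℂ) - (c : ℂ) ^ 2 / 4 := by
        exact_mod_cast congrArg (fun t : ℝ => (t : ℂ)) hy2
      have hI : (Complex.I) ^ 2 = -1 := Complex.I_sq
      have hquad : z ^ 2 + (c : ℂ) * z + (d : ℂ) = 0 := by
        rw [hz]
        push_cast
        linear_combination (y : ℂ) ^ 2 * hI - hy2C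
      have hrC : (r : ℂ) ^ 3 + (b₁ : ℂ) * (r : ℂ) ^ 2 + (b₂ : ℂ) * (r : ℂ) + (b₃ : ℂ) = 0 := by
        exact_mod_cast congrArg (fun t : ℝ => (t : ℂ)) hr
      have hcC : (c : ℂ) = (b₁ : ℂ) + (r : ℂ) := by exact_mod_cast congrArg (fun t : ℝ => (t : ℂ)) hc
      have hdC : (d : ℂ) = (b₂ : ℂ) + (b₁ : ℂ) * (r : ℂ) + (r : ℂ) ^ 2 := by
        rw [hd]; push_cast; ring
      have hb3C : (b₃ : ℂ) = -(r : ℂ) * ((b₂ : ℂ) + (b₁ : ℂ) * (r : ℂ) + (r : ℂ) ^ 2) := by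
        exact_mod_cast congrArg (fun t : ℝ => (t : ℂ)) hb3'
      have hroot : z ^ 3 + (b₁ : ℂ) * z ^ 2 + (b₂ : ℂ) * z + (b₃ : ℂ) = 0 := by
        linear_combination (z - (r : ℂ)) * hquad + ((r : ℂ) * z - z ^ 2) * hcC
          + ((r : ℂ) - z) * hdC + hb3C
      refine ⟨z, hroot, ?_⟩
      have hcneg : c < 0 := by rw [hc]; linarith
      have hxpos : 0 < -(c / 2) := by linarith
      have hz0 : z ≠ 0 := by
        intro h
        rw [h] at hzre
        simp at hzre
        linarith
      have habs2 : ‖z‖ ^ 2 = d := by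
        rw [Complex.sq_norm, Complex.normSq_apply, hzre, hzim]
        nlinarith [hy2]
      have hdlt : d < (-c) ^ 2 := by
        have h2 : d = b₂ + r * c := by rw [hd, hc]; ring
        have h4 : 0 < -c := by linarith
        nlinarith [mul_lt_mul_of_pos_right (show -r < -c by rw [hc]; linarith) h4]
      have habslt : ‖z‖ < -c := by
        refine lt_of_pow_lt_pow_left₀ 2 (by linarith) ?_
        rw [habs2]; exact hdlt
      have habspos : 0 < ‖z‖ := norm_pos_iff.mpr hz0
      have hcosgt : Real.cos (Real.pi / 3) < Real.cos (Complex.arg z) := by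
        rw [Complex.cos_arg hz0, Real.cos_pi_div_three, hzre]
        rw [lt_div_iff₀ habspos]
        linarith
      have hlt : |z.arg| < Real.pi / 3 := by
        by_contra hcon
        push_neg at hcon
        have hle : Real.cos |z.arg| ≤ Real.cos (Real.pi / 3) :=
          Real.cos_le_cos_of_nonneg_of_le_pi (by positivity) (Complex.abs_arg_le_pi z) hcon
        rw [Real.cos_abs] at hle
        linarith
      linarith
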